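/- Let μ ∈ (1,2), let l ≥ 1 and t ≥ l, and let λ denote Lebesgue measure. Then λ({x ∈ [0,1) : T(γ^{t−l+i}(x)) = I_{l+i} for all i = 0,1,…,l}) · μ^l · |I_l| = |I_{2l}| · λ({x ∈ [0,1) : T(γ^{t−l}(x)) = I_l}), and the same identity holds with each I replaced by Ī. -/
import Mathlib


open Set MeasureTheory

/-- The tent map `f(x) = μx` for `x ≤ 1/2` and `μ(1-x)` for `x ≥ 1/2`. -/
noncomputable def tentMap (μ : ℝ) (x : ℝ) : ℝ :=
  if x ≤ 1/2 then μ * x else μ * (1 - x)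

/-- `tentBit μ x k` is the `(k+1)`-st bit `b_{k+1}` of the tent code of `x`. -/
noncomputable def tentBit (μ x : ℝ) : ℕ → Bool
  | 0 => if 1/2 ≤ x then true else false
  | k + 1 =>
    if (tentMap μ)^[k+1] x < 1/2 then tentBit μ x k
    else if 1/2 < (tentMap μ)^[k+1] x then !(tentBit μ x k)
    else true

/-- The tent code `γ^n(x) = b_1 ⋯ b_n`. -/
noncomputable def tentCode (μ : ℝ) (n : ℕ) (x : ℝ) : List Bool :=
  (List.range n).map (tentBit μ x)

/-- The tent language `L_n = {γ^n(x) : x ∈ [0,1)}`. -/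
def tentLang (μ : ℝ) (n : ℕ) : Set (List Bool) :=
  {w | ∃ x ∈ Set.Ico (0:ℝ) 1, tentCode μ n x = w}

/-- The segment-type `T(w) = {f^n(x) : x ∈ [0,1), γ^n(x) = w}`. -/
def segType (μ : ℝ) (n : ℕ) (w : List Bool) : Set ℝ :=
  {y | ∃ x ∈ Set.Ico (0:ℝ) 1, tentCode μ n x = w ∧ (tentMap μ)^[n] x = y}

/-- The set of segment-types `𝒯_n = {T(w) : w ∈ L_n}`. -/
def typeSet (μ : ℝ) (n : ℕ) : Set (Set ℝ) :=
  {S | ∃ w ∈ tentLang μ n, segType μ n w = S}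

/-- `I_i = T(γ^i(1/2))`. -/
noncomputable def Iseg (μ : ℝ) (i : ℕ) : Set ℝ :=
  segType μ i (tentCode μ i (1/2))

/-- `Ī_i = T(c̄_i)` where `c̄_i` is the bitwise complement of `γ^i(1/2)`. -/
noncomputable def Isegbar (μ : ℝ) (i : ℕ) : Set ℝ :=
  segType μ i ((tentCode μ i (1/2)).map (fun b => !b))

/-- The length of the interval `T(w)` (zero if `T(w)` is empty). -/
noncomputable def segLen (μ : ℝ) (n : ℕ) (w : List Bool) : ℝ :=
  (MeasureTheory.volume (segType μ n w)).toReal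
namespace GoBack
open Pointwise

/-- The cylinder of a word. -/
def Cyl (μ : ℝ) (n : ℕ) (w : List Bool) : Set ℝ :=
  {x ∈ Set.Ico (0:ℝ) 1 | tentCode μ n x = w}

lemma tentCode_succ (μ : ℝ) (n : ℕ) (x : ℝ) :
    tentCode μ (n+1) x = tentCode μ n x ++ [tentBit μ x n] := by
  simp [tentCode, List.range_succ]

lemma length_tentCode (μ : ℝ) (n : ℕ) (x : ℝ) : (tentCode μ n x).length = n := by
  simp [tentCode]

lemma tentCode_take (μ : ℝ) {n n' : ℕ} (h : n ≤ n') (x : ℝ) :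
    (tentCode μ n' x).take n = tentCode μ n x := by
  simp [tentCode, ← List.map_take, List.take_range, Nat.min_eq_left h]

lemma segType_eq_image (μ : ℝ) (n : ℕ) (w : List Bool) :
    segType μ n w = (tentMap μ)^[n] '' Cyl μ n w := by
  ext y
  simp only [segType, Cyl, Set.mem_image, Set.mem_setOf_eq, Set.mem_sep_iff]
  tauto

lemma mem_segType_self {μ x : ℝ} (hx : x ∈ Set.Ico (0:ℝ) 1) (n : ℕ) :
    (tentMap μ)^[n] x ∈ segType μ n (tentCode μ n x) := ⟨x, hx, rfl, rfl⟩

lemma segType_eq_empty {μ : ℝ} {n : ℕ} {w : List Bool} (h : w.length ≠ n) :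
    segType μ n w = ∅ := by
  ext y
  simp only [segType, Set.mem_setOf_eq, Set.mem_empty_iff_false, iff_false, not_exists]
  rintro x ⟨hx, hc, -⟩
  exact h (hc ▸ length_tentCode μ n x)

lemma segType_nil (μ : ℝ) : segType μ 0 [] = Set.Ico (0:ℝ) 1 := by
  ext y
  simp [segType, tentCode]

/-- The half-line determined by the previous bit and the next bit. -/
def Hside : Bool → Bool → Set ℝ
  | true, true => Set.Iic (1/2)
  | true, false => Set.Ioi (1/2)
  | false, true => Set.Ici (1/2)
  | false, false => Set.Iio (1/2)

/-- the bit before bit `n` (with junk value `false` for `n = 0`). -/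
noncomputable def prevBit (μ x : ℝ) : ℕ → Bool
  | 0 => false
  | k + 1 => tentBit μ x k

lemma tentBit_eq_iff (μ x : ℝ) (n : ℕ) (b : Bool) :
    tentBit μ x n = b ↔ (tentMap μ)^[n] x ∈ Hside (prevBit μ x n) b := by
  cases n with
  | zero =>
    cases b <;> simp [tentBit, prevBit, Hside, not_le, le_of_lt]
  | succ k =>
    have hdef : tentBit μ x (k+1) =
        if (tentMap μ)^[k+1] x < 1/2 then tentBit μ x k
        else if 1/2 < (tentMap μ)^[k+1] x then !(tentBit μ x k) else true := rfl
    rcases lt_trichotomy ((tentMap μ)^[k+1] x) (1/2) with h | h | h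
    · rw [hdef, if_pos h]
      cases hb : tentBit μ x k <;> cases b <;>
        simp only [hb, prevBit, Hside, Set.mem_Iio, Set.mem_Iic, Set.mem_Ici, Set.mem_Ioi,
          false_iff, true_iff, iff_true, iff_false, not_le, not_lt] <;>
        first | (simp; done) | linarith |
          (simp only [Function.iterate_succ_apply] at h ⊢; norm_num at h ⊢; linarith)
    · rw [hdef, if_neg (by linarith), if_neg (by linarith)]
      cases hb : tentBit μ x k <;> cases b <;>
        simp only [hb, prevBit, Hside, Set.mem_Iio, Set.mem_Iic, Set.mem_Ici, Set.mem_Ioi,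
          false_iff, true_iff, iff_true, iff_false, not_le, not_lt] <;>
        first | (simp; done) | linarith |
          (simp only [Function.iterate_succ_apply] at h ⊢; norm_num at h ⊢; linarith)
    · rw [hdef, if_neg (by linarith), if_pos h]
      cases hb : tentBit μ x k <;> cases b <;>
        simp only [hb, prevBit, Hside, Set.mem_Iio, Set.mem_Iic, Set.mem_Ici, Set.mem_Ioi,
          Bool.not_true, Bool.not_false, false_iff, true_iff, iff_true, iff_false,
          not_le, not_lt] <;>
        first | (simp; done) | linarith |
          (simp only [Function.iterate_succ_apply] at h ⊢; norm_num at h ⊢; linarith)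

lemma getLastD_append_singleton (w : List Bool) (b d : Bool) :
    (w ++ [b]).getLastD d = b := by
  simp

lemma getLastD_tentCode (μ x : ℝ) (n : ℕ) :
    (tentCode μ n x).getLastD false = prevBit μ x n := by
  cases n with
  | zero => simp [tentCode, prevBit]
  | succ k => rw [tentCode_succ, getLastD_append_singleton]; rfl

lemma mem_Cyl_succ {μ x : ℝ} {n : ℕ} {w : List Bool} {b : Bool} :
    x ∈ Cyl μ (n+1) (w ++ [b]) ↔
      x ∈ Cyl μ n w ∧ (tentMap μ)^[n] x ∈ Hside (w.getLastD false) b := by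
  constructor
  · rintro ⟨hx, hc⟩
    rw [tentCode_succ] at hc
    obtain ⟨h1, h2⟩ := List.append_inj' hc rfl
    have hb : tentBit μ x n = b := by simpa using h2
    refine ⟨⟨hx, h1⟩, ?_⟩
    have := (tentBit_eq_iff μ x n b).1 hb
    rwa [← h1, getLastD_tentCode]
  · rintro ⟨⟨hx, hc⟩, hH⟩
    refine ⟨hx, ?_⟩
    rw [← hc, getLastD_tentCode] at hH
    rw [tentCode_succ, hc, (tentBit_eq_iff μ x n b).2 hH]

lemma Cyl_succ (μ : ℝ) (n : ℕ) (w : List Bool) (b : Bool) :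
    Cyl μ (n+1) (w ++ [b]) =
      Cyl μ n w ∩ (tentMap μ)^[n] ⁻¹' Hside (w.getLastD false) b := by
  ext x; exact mem_Cyl_succ

lemma segType_succ (μ : ℝ) (n : ℕ) (w : List Bool) (b : Bool) :
    segType μ (n+1) (w ++ [b]) =
      tentMap μ '' (segType μ n w ∩ Hside (w.getLastD false) b) := by
  rw [segType_eq_image, segType_eq_image, Cyl_succ, Function.iterate_succ',
    Set.image_comp, Set.image_inter_preimage]


lemma tentMap_of_le {μ z : ℝ} (h : z ≤ 1/2) : tentMap μ z = μ * z := if_pos h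

lemma tentMap_of_ge {μ z : ℝ} (h : 1/2 ≤ z) : tentMap μ z = μ - μ * z := by
  rw [tentMap]
  split_ifs with h'
  · have : z = 1/2 := le_antisymm h' h
    subst this; ring
  · ring

lemma tentMap_image_le {μ : ℝ} {S : Set ℝ} (hS : S ⊆ Set.Iic (1/2)) :
    tentMap μ '' S = (fun x => μ * x) '' S :=
  Set.image_congr fun x hx => tentMap_of_le (hS hx)

lemma tentMap_image_ge {μ : ℝ} {S : Set ℝ} (hS : S ⊆ Set.Ici (1/2)) :
    tentMap μ '' S = (fun x => μ - μ * x) '' S :=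
  Set.image_congr fun x hx => tentMap_of_ge (hS hx)

lemma image_mul_Ioc {μ : ℝ} (hμ : 0 < μ) (a e : ℝ) :
    (fun x => μ * x) '' Set.Ioc a e = Set.Ioc (μ*a) (μ*e) := by
  simpa using Set.image_mul_left_Ioc hμ a e

lemma image_mul_Ico {μ : ℝ} (hμ : 0 < μ) (a e : ℝ) :
    (fun x => μ * x) '' Set.Ico a e = Set.Ico (μ*a) (μ*e) := by
  simpa using Set.image_mul_left_Ico hμ a e

lemma image_desc_Ioc {μ : ℝ} (hμ : 0 < μ) (a e : ℝ) :
    (fun x => μ - μ * x) '' Set.Ioc a e = Set.Ico (μ*(1-e)) (μ*(1-a)) := by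
  have h : (fun x : ℝ => μ - μ * x) = (fun y : ℝ => μ * y) ∘ (fun x : ℝ => 1 - x) := by
    funext x; simp; ring
  rw [h, Set.image_comp, Set.image_const_sub_Ioc, image_mul_Ico hμ]

lemma image_desc_Ico {μ : ℝ} (hμ : 0 < μ) (a e : ℝ) :
    (fun x => μ - μ * x) '' Set.Ico a e = Set.Ioc (μ*(1-e)) (μ*(1-a)) := by
  have h : (fun x : ℝ => μ - μ * x) = (fun y : ℝ => μ * y) ∘ (fun x : ℝ => 1 - x) := by
    funext x; simp; ring
  rw [h, Set.image_comp, Set.image_const_sub_Ico, image_mul_Ioc hμ]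

/-- Shape invariant: a word ending in `true` has an `Ioc` type, a word ending in
`false` has an `Ico` type. -/
lemma shape {μ : ℝ} (hμ : 0 < μ) :
    ∀ (n : ℕ) (w : List Bool) (b : Bool), ∃ a e : ℝ,
      segType μ (n+1) (w ++ [b]) = if b then Set.Ioc a e else Set.Ico a e := by
  intro n
  induction n with
  | zero =>
    intro w b
    rcases List.eq_nil_or_concat w with rfl | ⟨w', b', rfl⟩
    · cases b
      · refine ⟨μ * 0, μ * (1 ⊓ (1/2)), ?_⟩
        rw [segType_succ, segType_nil]
        simp only [Bool.false_eq_true, if_false, if_true, reduceIte]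
        rw [show ([] : List Bool).getLastD false = false from rfl,
          show Hside false false = Set.Iio (1/2) from rfl, Set.Ico_inter_Iio,
          tentMap_image_le (fun x hx => le_of_lt (lt_of_lt_of_le hx.2 inf_le_right)),
          image_mul_Ico hμ]
      · refine ⟨μ*(1-1), μ*(1-(0 ⊔ 1/2)), ?_⟩
        rw [segType_succ, segType_nil]
        simp only [Bool.false_eq_true, if_false, if_true, reduceIte]
        rw [show ([] : List Bool).getLastD false = false from rfl,
          show Hside false true = Set.Ici (1/2) from rfl, Set.Ico_inter_Ici,
          tentMap_image_ge (fun x hx => le_trans le_sup_right hx.1),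
          image_desc_Ico hμ]
    · refine ⟨0, 0, ?_⟩
      rw [segType_eq_empty (by simp)]
      cases b <;> simp
  | succ n IH =>
    intro w b
    rcases List.eq_nil_or_concat w with rfl | ⟨w', b', rfl⟩
    · refine ⟨0, 0, ?_⟩
      rw [segType_eq_empty (by simp)]
      cases b <;> simp
    · rw [List.concat_eq_append]
      obtain ⟨a, e, hprev⟩ := IH w' b'
      rw [segType_succ, getLastD_append_singleton, hprev]
      cases b' <;> cases b <;> simp only [Bool.false_eq_true, if_false, if_true, reduceIte]
      · -- b' = false, b = false : Ico ∩ Iio, increasing branch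
        refine ⟨μ * a, μ * (e ⊓ (1/2)), ?_⟩
        rw [show Hside false false = Set.Iio (1/2) from rfl, Set.Ico_inter_Iio,
          tentMap_image_le (fun x hx => le_of_lt (lt_of_lt_of_le hx.2 inf_le_right)),
          image_mul_Ico hμ]
      · -- b' = false, b = true : Ico ∩ Ici, decreasing branch
        refine ⟨μ*(1-e), μ*(1-(a ⊔ 1/2)), ?_⟩
        rw [show Hside false true = Set.Ici (1/2) from rfl, Set.Ico_inter_Ici,
          tentMap_image_ge (fun x hx => le_trans le_sup_right hx.1),
          image_desc_Ico hμ]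
      · -- b' = true, b = false : Ioc ∩ Ioi, decreasing branch
        refine ⟨μ*(1-e), μ*(1-(a ⊔ 1/2)), ?_⟩
        rw [show Hside true false = Set.Ioi (1/2) from rfl, Set.Ioc_inter_Ioi,
          tentMap_image_ge (fun x hx => le_of_lt (lt_of_le_of_lt le_sup_right hx.1)),
          image_desc_Ioc hμ]
      · -- b' = true, b = true : Ioc ∩ Iic, increasing branch
        refine ⟨μ * a, μ * (e ⊓ (1/2)), ?_⟩
        rw [show Hside true true = Set.Iic (1/2) from rfl, Set.Ioc_inter_Iic,
          tentMap_image_le (fun x hx => le_trans hx.2 inf_le_right),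
          image_mul_Ioc hμ]

lemma Ioc_ne_Ico {a e a' e' : ℝ} (hne : (Set.Ioc a e).Nonempty) :
    Set.Ioc a e ≠ Set.Ico a' e' := by
  intro h
  have hne' : (Set.Ico a' e').Nonempty := h ▸ hne
  have hae' : a' < e' := Set.nonempty_Ico.1 hne'
  have h1 : a' ∈ Set.Ioc a e := h.symm ▸ (Set.left_mem_Ico.2 hae')
  have h2 : (a + a')/2 ∈ Set.Ioc a e := ⟨by linarith [h1.1], by linarith [h1.1, h1.2]⟩
  have h3 : (a + a')/2 ∈ Set.Ico a' e' := h ▸ h2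
  linarith [h1.1, h3.1]

lemma lastBit_eq {μ : ℝ} (hμ : 0 < μ) {n j : ℕ} {u v : List Bool}
    (hn : 1 ≤ n) (hj : 1 ≤ j) (hu : u ≠ []) (hv : v ≠ [])
    (h : segType μ n u = segType μ j v) (hne : (segType μ n u).Nonempty) :
    u.getLastD false = v.getLastD false := by
  obtain ⟨n', rfl⟩ : ∃ k, n = k + 1 := ⟨n - 1, by omega⟩
  obtain ⟨j', rfl⟩ : ∃ k, j = k + 1 := ⟨j - 1, by omega⟩
  rw [← List.dropLast_append_getLast hu] at h hne ⊢
  rw [← List.dropLast_append_getLast hv] at h ⊢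
  rw [getLastD_append_singleton, getLastD_append_singleton]
  obtain ⟨a1, e1, h1⟩ := shape hμ n' u.dropLast (u.getLast hu)
  obtain ⟨a2, e2, h2⟩ := shape hμ j' v.dropLast (v.getLast hv)
  rw [h1] at h hne
  rw [h2] at h
  cases hb1 : u.getLast hu <;> cases hb2 : v.getLast hv <;>
    rw [hb1] at h hne <;> rw [hb2] at h <;>
    simp only [Bool.false_eq_true, if_false, if_true, reduceIte] at h hne <;>
    first
    | rfl
    | exact absurd h (Ioc_ne_Ico hne)
    | (have hne2 : (Set.Ioc a2 e2).Nonempty := h ▸ hne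
       exact absurd h.symm (Ioc_ne_Ico hne2))

lemma step_eq {μ : ℝ} (hμ : 0 < μ) {n j : ℕ} {u v : List Bool} (c : Bool)
    (hn : 1 ≤ n) (hj : 1 ≤ j) (hu : u ≠ []) (hv : v ≠ [])
    (h : segType μ n u = segType μ j v) (hne : (segType μ n u).Nonempty) :
    segType μ (n+1) (u ++ [c]) = segType μ (j+1) (v ++ [c]) := by
  obtain ⟨n', rfl⟩ : ∃ k, n = k + 1 := ⟨n - 1, by omega⟩
  obtain ⟨j', rfl⟩ : ∃ k, j = k + 1 := ⟨j - 1, by omega⟩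
  rw [segType_succ, segType_succ, h, lastBit_eq hμ hn hj hu hv h hne]

lemma step_ne {μ : ℝ} (hμ : 0 < μ) {n j : ℕ} {u v : List Bool} {c c' : Bool}
    (hcc : c ≠ c') (hne : (segType μ (n+1) (u ++ [c])).Nonempty) :
    segType μ (n+1) (u ++ [c]) ≠ segType μ (j+1) (v ++ [c']) := by
  obtain ⟨a1, e1, h1⟩ := shape hμ n u c
  obtain ⟨a2, e2, h2⟩ := shape hμ j v c'
  cases c <;> cases c' <;> simp only [Bool.false_eq_true, if_false, if_true, reduceIte] at h1 h2
  · exact absurd rfl hcc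
  · rw [h1] at hne ⊢
    rw [h2]
    intro hh
    have hne2 : (Set.Ioc a2 e2).Nonempty := hh ▸ hne
    exact absurd hh.symm (Ioc_ne_Ico hne2)
  · rw [h1] at hne ⊢
    rw [h2]
    exact Ioc_ne_Ico hne
  · exact absurd rfl hcc


lemma Hside_subset (β b : Bool) :
    Hside β b ⊆ Set.Iic (1/2) ∨ Hside β b ⊆ Set.Ici (1/2) := by
  cases β <;> cases b
  · exact Or.inl (Set.Iio_subset_Iic_self)
  · exact Or.inr (le_refl _)
  · exact Or.inr (Set.Ioi_subset_Ici_self)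
  · exact Or.inl (le_refl _)

lemma Cyl_nil_zero (μ : ℝ) : Cyl μ 0 [] = Set.Ico (0:ℝ) 1 := by
  ext x; simp [Cyl, tentCode]

lemma Cyl_eq_empty {μ : ℝ} {n : ℕ} {w : List Bool} (h : w.length ≠ n) :
    Cyl μ n w = ∅ := by
  ext x
  simp only [Cyl, Set.mem_sep_iff, Set.mem_empty_iff_false, iff_false, not_and]
  intro _ hc
  exact h (hc ▸ length_tentCode μ n x)

/-- On a cylinder, `f^[n]` is affine with slope `± μ^n`. -/
lemma affine {μ : ℝ} (hμ : 0 < μ) (n : ℕ) (w : List Bool) :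
    ∃ ε c : ℝ, (ε = 1 ∨ ε = -1) ∧
      ∀ x ∈ Cyl μ n w, (tentMap μ)^[n] x = ε * μ^n * x + c := by
  induction n generalizing w with
  | zero => exact ⟨1, 0, Or.inl rfl, fun x _ => by simp⟩
  | succ n IH =>
    rcases List.eq_nil_or_concat w with rfl | ⟨w', b, rfl⟩
    · refine ⟨1, 0, Or.inl rfl, fun x hx => ?_⟩
      rw [Cyl_eq_empty (by simp)] at hx
      exact absurd hx (Set.notMem_empty x)
    · rw [List.concat_eq_append]
      obtain ⟨ε, c, hε, hf⟩ := IH w'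
      rcases Hside_subset (w'.getLastD false) b with hH | hH
      · refine ⟨ε, μ * c, hε, fun x hx => ?_⟩
        obtain ⟨hx1, hx2⟩ := mem_Cyl_succ.1 hx
        rw [Function.iterate_succ_apply', tentMap_of_le (hH hx2), hf x hx1]
        ring
      · rcases hε with rfl | rfl
        · refine ⟨-1, μ - μ * c, Or.inr rfl, fun x hx => ?_⟩
          obtain ⟨hx1, hx2⟩ := mem_Cyl_succ.1 hx
          rw [Function.iterate_succ_apply', tentMap_of_ge (hH hx2), hf x hx1]
          ring
        · refine ⟨1, μ - μ * c, Or.inl rfl, fun x hx => ?_⟩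
          obtain ⟨hx1, hx2⟩ := mem_Cyl_succ.1 hx
          rw [Function.iterate_succ_apply', tentMap_of_ge (hH hx2), hf x hx1]
          ring

lemma ordConnected_Hside (β b : Bool) : (Hside β b).OrdConnected := by
  cases β <;> cases b <;>
    first
    | exact Set.ordConnected_Iio
    | exact Set.ordConnected_Iic
    | exact Set.ordConnected_Ioi
    | exact Set.ordConnected_Ici

lemma ordConnected_Cyl {μ : ℝ} (hμ : 0 < μ) (n : ℕ) (w : List Bool) :
    (Cyl μ n w).OrdConnected := by
  induction n generalizing w with
  | zero =>
    rcases List.eq_nil_or_concat w with rfl | ⟨w', b, rfl⟩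
    · rw [Cyl_nil_zero]; exact Set.ordConnected_Ico
    · rw [Cyl_eq_empty (by simp)]; exact Set.ordConnected_empty
  | succ n IH =>
    rcases List.eq_nil_or_concat w with rfl | ⟨w', b, rfl⟩
    · rw [Cyl_eq_empty (by simp)]; exact Set.ordConnected_empty
    · rw [List.concat_eq_append]
      constructor
      intro x hx y hy z hz
      obtain ⟨hx1, hx2⟩ := mem_Cyl_succ.1 hx
      obtain ⟨hy1, hy2⟩ := mem_Cyl_succ.1 hy
      have hz1 : z ∈ Cyl μ n w' := (IH w').out hx1 hy1 hz
      obtain ⟨ε, c, hε, hf⟩ := affine hμ n w'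
      have hpow : (0:ℝ) < μ^n := pow_pos hμ n
      refine mem_Cyl_succ.2 ⟨hz1, ?_⟩
      rcases hε with rfl | rfl
      · refine (ordConnected_Hside _ _).out hx2 hy2 ⟨?_, ?_⟩
        · rw [hf x hx1, hf z hz1]; nlinarith [hz.1]
        · rw [hf z hz1, hf y hy1]; nlinarith [hz.2]
      · refine (ordConnected_Hside _ _).out hy2 hx2 ⟨?_, ?_⟩
        · rw [hf y hy1, hf z hz1]; nlinarith [hz.2]
        · rw [hf z hz1, hf x hx1]; nlinarith [hz.1]

lemma measurableSet_Cyl {μ : ℝ} (hμ : 0 < μ) (n : ℕ) (w : List Bool) :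
    MeasurableSet (Cyl μ n w) :=
  (ordConnected_Cyl hμ n w).measurableSet

lemma volume_image_affine (k c : ℝ) (E : Set ℝ) :
    volume ((fun x => k * x + c) '' E) = ENNReal.ofReal |k| * volume E := by
  have h : (fun x : ℝ => k * x + c) = (fun y : ℝ => y + c) ∘ (fun x : ℝ => k * x) := rfl
  rw [h, Set.image_comp]
  have h2 : (fun y : ℝ => y + c) '' ((fun x : ℝ => k * x) '' E)
      = (fun y : ℝ => y + (-c)) ⁻¹' ((fun x : ℝ => k * x) '' E) := by
    ext y
    simp only [Set.mem_image, Set.mem_preimage]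
    constructor
    · rintro ⟨z, hz, rfl⟩; simpa using hz
    · intro hz; exact ⟨y + (-c), hz, by ring⟩
  rw [h2, measure_preimage_add_right]
  have h3 : (fun x : ℝ => k * x) '' E = k • E := by
    rw [← Set.image_smul]; rfl
  rw [h3]
  simpa using Measure.addHaar_smul volume k E

lemma volume_segType {μ : ℝ} (hμ : 0 < μ) (n : ℕ) (w : List Bool) :
    volume (segType μ n w) = ENNReal.ofReal (μ^n) * volume (Cyl μ n w) := by
  obtain ⟨ε, c, hε, hf⟩ := affine hμ n w
  rw [segType_eq_image]
  have himg : (tentMap μ)^[n] '' Cyl μ n w = (fun x => ε * μ^n * x + c) '' Cyl μ n w :=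
    Set.image_congr hf
  rw [himg, volume_image_affine]
  congr 1
  rcases hε with rfl | rfl
  · rw [one_mul, abs_of_nonneg (le_of_lt (pow_pos hμ n))]
  · rw [show (-1 : ℝ) * μ^n = -(μ^n) by ring, abs_neg, abs_of_nonneg (le_of_lt (pow_pos hμ n))]

lemma tentMap_mem_Icc {μ x : ℝ} (hμ1 : 0 < μ) (hμ2 : μ < 2) (hx : x ∈ Set.Icc (0:ℝ) 1) :
    tentMap μ x ∈ Set.Icc (0:ℝ) 1 := by
  obtain ⟨h0, h1⟩ := hx
  rw [tentMap]
  split_ifs with h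
  · constructor <;> nlinarith
  · constructor <;> nlinarith

lemma iterate_mem_Icc {μ x : ℝ} (hμ1 : 0 < μ) (hμ2 : μ < 2) (hx : x ∈ Set.Icc (0:ℝ) 1) (n : ℕ) :
    (tentMap μ)^[n] x ∈ Set.Icc (0:ℝ) 1 := by
  induction n with
  | zero => simpa
  | succ n IH => rw [Function.iterate_succ_apply']; exact tentMap_mem_Icc hμ1 hμ2 IH

lemma tentMap_le_half {μ x : ℝ} (hμ1 : 0 < μ) (hx : x ∈ Set.Icc (0:ℝ) 1) :
    tentMap μ x ≤ μ/2 := by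
  obtain ⟨h0, h1⟩ := hx
  rw [tentMap]
  split_ifs with h
  · nlinarith
  · push_neg at h; nlinarith

lemma segType_subset_Iic {μ : ℝ} (hμ1 : 0 < μ) (hμ2 : μ < 2) (n : ℕ) (w : List Bool) :
    segType μ (n+1) w ⊆ Set.Iic (μ/2) := by
  rintro y ⟨x, hx, -, rfl⟩
  rw [Function.iterate_succ_apply']
  exact tentMap_le_half hμ1
    (iterate_mem_Icc hμ1 hμ2 ⟨hx.1, le_of_lt hx.2⟩ n)

lemma segType_subset_Icc {μ : ℝ} (hμ1 : 0 < μ) (hμ2 : μ < 2) (n : ℕ) (w : List Bool) :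
    segType μ n w ⊆ Set.Icc (0:ℝ) 1 := by
  rintro y ⟨x, hx, -, rfl⟩
  exact iterate_mem_Icc hμ1 hμ2 ⟨hx.1, le_of_lt hx.2⟩ n


lemma tentCode_ofFn (μ x : ℝ) (m : ℕ) :
    List.ofFn (fun i : Fin m => tentBit μ x i) = tentCode μ m x := by
  apply List.ext_getElem (by simp [tentCode])
  intro i h1 h2
  simp [tentCode]

lemma tentCode_ne_nil (μ x : ℝ) {n : ℕ} (hn : 1 ≤ n) : tentCode μ n x ≠ [] := by
  intro h
  have := length_tentCode μ n x
  rw [h] at this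
  simp at this
  omega

lemma tentCode_split (μ : ℝ) (m l : ℕ) (x : ℝ) :
    tentCode μ (m+l) x = tentCode μ m x ++ (List.range l).map (fun i => tentBit μ x (m+i)) := by
  rw [tentCode, List.range_add, List.map_append, List.map_map]
  rfl

lemma map_range_eq_iff {α : Type*} (f g : ℕ → α) (l : ℕ) :
    (List.range l).map f = (List.range l).map g ↔ ∀ i < l, f i = g i := by
  constructor
  · intro h i hi
    have := congrArg (fun L => L[i]?) h
    simpa [List.getElem?_map, List.getElem?_range, hi] using this
  · intro h
    exact List.map_congr_left fun a ha => h a (List.mem_range.1 ha)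

lemma Eword_succ (e : ℕ → Bool) (i : ℕ) :
    (List.range (i+1)).map e = (List.range i).map e ++ [e i] := by
  simp [List.range_succ]

lemma Eword_ne_nil (e : ℕ → Bool) {i : ℕ} (hi : 1 ≤ i) : (List.range i).map e ≠ [] := by
  intro h
  have := congrArg List.length h
  simp at this
  omega

lemma main_count {μ : ℝ} (hμ1 : 1 < μ) (hμ2 : μ < 2) (e : ℕ → Bool) (l m : ℕ) (hl : 1 ≤ l)
    (hK : (segType μ (l+l) ((List.range (l+l)).map e)).Nonempty) :
    (volume {x ∈ Set.Ico (0:ℝ) 1 | ∀ i ≤ l,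
        segType μ (m + i) (tentCode μ (m+i) x)
          = segType μ (l+i) ((List.range (l+i)).map e)}).toReal *
      (μ ^ l * (volume (segType μ l ((List.range l).map e))).toReal) =
    (volume (segType μ (l+l) ((List.range (l+l)).map e))).toReal *
      (volume {x ∈ Set.Ico (0:ℝ) 1 |
        segType μ m (tentCode μ m x) = segType μ l ((List.range l).map e)}).toReal := by
  classical
  have hμ0 : 0 < μ := lt_trans one_pos hμ1
  -- all the K_i are nonempty
  have hKne : ∀ i, i ≤ l + l → (segType μ i ((List.range i).map e)).Nonempty := by
    intro i hi
    obtain ⟨y, xx, hxx, hc, -⟩ := hK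
    have h2 : tentCode μ i xx = (List.range i).map e := by
      rw [← tentCode_take μ hi xx, hc, ← List.map_take, List.take_range, Nat.min_eq_left hi]
    exact ⟨(tentMap μ)^[i] xx, by rw [← h2]; exact mem_segType_self hxx i⟩
  rcases Nat.eq_zero_or_pos m with rfl | hm
  · -- degenerate case `m = 0` : both sets are empty
    have hKne1 : segType μ l ((List.range l).map e) ≠ Set.Ico (0:ℝ) 1 := by
      obtain ⟨l', rfl⟩ : ∃ k, l = k+1 := ⟨l-1, by omega⟩
      intro h
      have hp : (μ/2 + 1)/2 ∈ Set.Ico (0:ℝ) 1 := ⟨by linarith, by linarith⟩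
      rw [← h] at hp
      have h2 := Set.mem_Iic.1 (segType_subset_Iic hμ0 hμ2 l' _ hp)
      linarith
    have hA : {x ∈ Set.Ico (0:ℝ) 1 |
        segType μ 0 (tentCode μ 0 x) = segType μ l ((List.range l).map e)} = ∅ := by
      ext x
      simp only [Set.mem_sep_iff, Set.mem_empty_iff_false, iff_false, not_and]
      intro hx h
      have h0 : tentCode μ 0 x = [] := rfl
      rw [h0, segType_nil] at h
      exact hKne1 h.symm
    have hB : {x ∈ Set.Ico (0:ℝ) 1 | ∀ i ≤ l,
        segType μ (0 + i) (tentCode μ (0+i) x)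
          = segType μ (l+i) ((List.range (l+i)).map e)} = ∅ := by
      ext x
      simp only [Set.mem_sep_iff, Set.mem_empty_iff_false, iff_false, not_and]
      intro hx h
      have h0 := h 0 (Nat.zero_le l)
      have h0' : segType μ 0 (tentCode μ 0 x) = segType μ l ((List.range l).map e) := by
        simpa using h0
      rw [show tentCode μ 0 x = ([] : List Bool) from rfl, segType_nil] at h0'
      exact hKne1 h0'.symm
    rw [hA, hB, measure_empty]
    simp
  -- main case `1 ≤ m`
  have hchar : ∀ x ∈ Set.Ico (0:ℝ) 1,
      ((∀ i ≤ l, segType μ (m+i) (tentCode μ (m+i) x)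
          = segType μ (l+i) ((List.range (l+i)).map e)) ↔
       (segType μ m (tentCode μ m x) = segType μ l ((List.range l).map e) ∧
        ∀ i < l, tentBit μ x (m+i) = e (l+i))) := by
    intro x hx
    constructor
    · intro hall
      refine ⟨by simpa using hall 0 (Nat.zero_le l), ?_⟩
      intro i hi
      by_contra hne
      have h2 := hall (i+1) hi
      rw [show m + (i+1) = (m+i) + 1 from rfl, tentCode_succ,
        show l + (i+1) = (l+i) + 1 from rfl, Eword_succ] at h2
      have hne2 : (segType μ ((m+i)+1) (tentCode μ (m+i) x ++ [tentBit μ x (m+i)])).Nonempty := by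
        rw [← tentCode_succ]
        exact ⟨_, mem_segType_self hx (m+i+1)⟩
      exact step_ne hμ0 hne hne2 h2
    · rintro ⟨h0, hbits⟩
      intro i
      induction i with
      | zero => intro _; simpa using h0
      | succ i IH =>
        intro hi
        have h1 := IH (by omega)
        have hne1 : (segType μ (m+i) (tentCode μ (m+i) x)).Nonempty :=
          ⟨_, mem_segType_self hx (m+i)⟩
        have h2 := step_eq hμ0 (e (l+i)) (by omega : 1 ≤ m+i) (by omega : 1 ≤ l+i)
          (tentCode_ne_nil μ x (by omega)) (Eword_ne_nil e (by omega)) h1 hne1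
        rw [← Eword_succ e (l+i), ← hbits i (by omega), ← tentCode_succ] at h2
        exact h2
  -- the finite set of words of length `m` whose type is `K_l`
  set W : Finset (List Bool) :=
    ((Finset.univ : Finset (Fin m → Bool)).image List.ofFn).filter
      (fun w => segType μ m w = segType μ l ((List.range l).map e)) with hWdef
  have hWP : ∀ w ∈ W, segType μ m w = segType μ l ((List.range l).map e) :=
    fun w hw => (Finset.mem_filter.1 hw).2
  have hWlen : ∀ w ∈ W, w.length = m := by
    intro w hw
    obtain ⟨f, -, rfl⟩ := Finset.mem_image.1 (Finset.mem_filter.1 hw).1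
    simp
  have hmemW : ∀ x : ℝ, segType μ m (tentCode μ m x) = segType μ l ((List.range l).map e) →
      tentCode μ m x ∈ W := by
    intro x h
    exact Finset.mem_filter.2
      ⟨Finset.mem_image.2 ⟨fun i : Fin m => tentBit μ x i, Finset.mem_univ _, tentCode_ofFn μ x m⟩, h⟩
  -- decomposition of the base set A
  have hA : {x ∈ Set.Ico (0:ℝ) 1 |
      segType μ m (tentCode μ m x) = segType μ l ((List.range l).map e)}
        = ⋃ w ∈ W, Cyl μ m w := by
    ext x
    simp only [Set.mem_sep_iff, Set.mem_iUnion, exists_prop]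
    constructor
    · rintro ⟨hx, h⟩
      exact ⟨tentCode μ m x, hmemW x h, hx, rfl⟩
    · rintro ⟨w, hw, hx, hc⟩
      exact ⟨hx, by rw [hc]; exact hWP w hw⟩
  -- the forced suffix
  set D : List Bool := (List.range l).map (fun i => e (l+i)) with hDdef
  have hD : ∀ w ∈ W, segType μ (m+l) (w ++ D) = segType μ (l+l) ((List.range (l+l)).map e) := by
    intro w hw
    have hwne : w ≠ [] := by
      intro h
      have := hWlen w hw
      rw [h] at this
      simp at this
      omega
    suffices h : ∀ i, i ≤ l → segType μ (m+i) (w ++ (List.range i).map (fun k => e (l+k)))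
        = segType μ (l+i) ((List.range (l+i)).map e) from h l le_rfl
    intro i
    induction i with
    | zero => intro _; simpa using hWP w hw
    | succ i IH =>
      intro hi
      have h1 := IH (by omega)
      have hne1 : (segType μ (m+i) (w ++ (List.range i).map (fun k => e (l+k)))).Nonempty := by
        rw [h1]; exact hKne (l+i) (by omega)
      have h2 := step_eq hμ0 (e (l+i)) (by omega : 1 ≤ m+i) (by omega : 1 ≤ l+i)
        (List.append_ne_nil_of_left_ne_nil hwne _) (Eword_ne_nil e (by omega)) h1 hne1
      rw [List.append_assoc] at h2
      rw [show m + (i+1) = (m+i)+1 from rfl, show l + (i+1) = (l+i)+1 from rfl,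
        Eword_succ e (l+i),
        show (List.range (i+1)).map (fun k => e (l+k))
          = (List.range i).map (fun k => e (l+k)) ++ [e (l+i)] from Eword_succ _ i]
      exact h2
  -- decomposition of the set B
  have hB : {x ∈ Set.Ico (0:ℝ) 1 | ∀ i ≤ l,
      segType μ (m + i) (tentCode μ (m+i) x)
        = segType μ (l+i) ((List.range (l+i)).map e)}
      = ⋃ w ∈ W, Cyl μ (m+l) (w ++ D) := by
    ext x
    simp only [Set.mem_sep_iff, Set.mem_iUnion, exists_prop]
    constructor
    · rintro ⟨hx, hall⟩
      obtain ⟨h0, hbits⟩ := (hchar x hx).1 hall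
      refine ⟨tentCode μ m x, hmemW x h0, hx, ?_⟩
      rw [tentCode_split]
      congr 1
      exact (map_range_eq_iff _ _ l).2 hbits
    · rintro ⟨w, hw, hx, hc⟩
      have hcm : tentCode μ m x = w := by
        have h := congrArg (List.take m) hc
        rwa [tentCode_take μ (by omega : m ≤ m + l), List.take_left' (hWlen w hw)] at h
      refine ⟨hx, (hchar x hx).2 ⟨?_, ?_⟩⟩
      · rw [hcm]; exact hWP w hw
      · rw [tentCode_split, hcm] at hc
        exact (map_range_eq_iff _ _ l).1 (List.append_cancel_left hc)
  -- measures via counting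
  have hdisjA : (W : Set (List Bool)).PairwiseDisjoint (fun w => Cyl μ m w) := by
    intro w1 _ w2 _ hne12
    exact Set.disjoint_left.2 fun x hx1 hx2 => hne12 (hx1.2.symm.trans hx2.2)
  have hdisjB : (W : Set (List Bool)).PairwiseDisjoint (fun w => Cyl μ (m+l) (w ++ D)) := by
    intro w1 h1 w2 h2 hne12
    refine Set.disjoint_left.2 fun x hx1 hx2 => hne12 ?_
    have h := hx1.2.symm.trans hx2.2
    exact List.append_cancel_right h
  have hcountA : ENNReal.ofReal (μ^m) * volume (⋃ w ∈ W, Cyl μ m w)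
      = (W.card : ENNReal) * volume (segType μ l ((List.range l).map e)) := by
    rw [measure_biUnion_finset hdisjA (fun w _ => measurableSet_Cyl hμ0 m w), Finset.mul_sum]
    rw [Finset.sum_congr rfl (fun w hw => ((volume_segType hμ0 m w).symm.trans
      (by rw [hWP w hw]) : ENNReal.ofReal (μ^m) * volume (Cyl μ m w)
        = volume (segType μ l ((List.range l).map e))))]
    rw [Finset.sum_const, nsmul_eq_mul]
  have hcountB : ENNReal.ofReal (μ^(m+l)) * volume (⋃ w ∈ W, Cyl μ (m+l) (w ++ D))
      = (W.card : ENNReal) * volume (segType μ (l+l) ((List.range (l+l)).map e)) := by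
    rw [measure_biUnion_finset hdisjB (fun w _ => measurableSet_Cyl hμ0 (m+l) (w ++ D)),
      Finset.mul_sum]
    rw [Finset.sum_congr rfl (fun w hw => ((volume_segType hμ0 (m+l) (w ++ D)).symm.trans
      (by rw [hD w hw]) : ENNReal.ofReal (μ^(m+l)) * volume (Cyl μ (m+l) (w ++ D))
        = volume (segType μ (l+l) ((List.range (l+l)).map e))))]
    rw [Finset.sum_const, nsmul_eq_mul]
  -- convert to real numbers
  have hr1 : μ^m * (volume {x ∈ Set.Ico (0:ℝ) 1 |
      segType μ m (tentCode μ m x) = segType μ l ((List.range l).map e)}).toReal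
      = (W.card : ℝ) * (volume (segType μ l ((List.range l).map e))).toReal := by
    have := congrArg ENNReal.toReal (hA ▸ hcountA)
    rwa [ENNReal.toReal_mul, ENNReal.toReal_mul, ENNReal.toReal_ofReal
      (le_of_lt (pow_pos hμ0 m)), ENNReal.toReal_natCast] at this
  have hr2 : μ^(m+l) * (volume {x ∈ Set.Ico (0:ℝ) 1 | ∀ i ≤ l,
      segType μ (m + i) (tentCode μ (m+i) x)
        = segType μ (l+i) ((List.range (l+i)).map e)}).toReal
      = (W.card : ℝ) * (volume (segType μ (l+l) ((List.range (l+l)).map e))).toReal := by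
    have := congrArg ENNReal.toReal (hB ▸ hcountB)
    rwa [ENNReal.toReal_mul, ENNReal.toReal_mul, ENNReal.toReal_ofReal
      (le_of_lt (pow_pos hμ0 (m+l))), ENNReal.toReal_natCast] at this
  have hpow : (μ:ℝ)^(m+l) ≠ 0 := pow_ne_zero _ (ne_of_gt hμ0)
  apply mul_left_cancel₀ hpow
  linear_combination (μ^l * (volume (segType μ l ((List.range l).map e))).toReal) * hr2
    - (μ^l * (volume (segType μ (l+l) ((List.range (l+l)).map e))).toReal) * hr1

end GoBack

theorem go_back_prob (μ : ℝ) (hμ1 : 1 < μ) (hμ2 : μ < 2)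
    (l t : ℕ) (hl : 1 ≤ l) (ht : l ≤ t) :
    ((volume {x ∈ Set.Ico (0:ℝ) 1 | ∀ i ≤ l,
          segType μ (t - l + i) (tentCode μ (t - l + i) x) = Iseg μ (l + i)}).toReal *
        (μ ^ l * (volume (Iseg μ l)).toReal) =
      (volume (Iseg μ (2*l))).toReal *
        (volume {x ∈ Set.Ico (0:ℝ) 1 |
          segType μ (t - l) (tentCode μ (t - l) x) = Iseg μ l}).toReal) ∧
    ((volume {x ∈ Set.Ico (0:ℝ) 1 | ∀ i ≤ l,
          segType μ (t - l + i) (tentCode μ (t - l + i) x) = Isegbar μ (l + i)}).toReal *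
        (μ ^ l * (volume (Isegbar μ l)).toReal) =
      (volume (Isegbar μ (2*l))).toReal *
        (volume {x ∈ Set.Ico (0:ℝ) 1 |
          segType μ (t - l) (tentCode μ (t - l) x) = Isegbar μ l}).toReal) := by
  have hμ0 : 0 < μ := lt_trans one_pos hμ1
  have hhalf : (1:ℝ)/2 ∈ Set.Ico (0:ℝ) 1 := ⟨by norm_num, by norm_num⟩
  constructor
  · -- the `I` case
    have hne : (segType μ (l+l) ((List.range (l+l)).map (tentBit μ (1/2)))).Nonempty :=
      ⟨_, GoBack.mem_segType_self hhalf (l+l)⟩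
    have h := GoBack.main_count hμ1 hμ2 (tentBit μ (1/2)) l (t-l) hl hne
    rw [show 2*l = l + l from two_mul l]
    exact h
  · -- the `Ī` case
    have hIbar : ∀ i, Isegbar μ i
        = segType μ i ((List.range i).map (fun k => !(tentBit μ (1/2) k))) := by
      intro i
      unfold Isegbar tentCode
      rw [List.map_map]
      rfl
    by_cases hne : (segType μ (l+l)
        ((List.range (l+l)).map (fun k => !(tentBit μ (1/2) k)))).Nonempty
    · have h := GoBack.main_count hμ1 hμ2 (fun k => !(tentBit μ (1/2) k)) l (t-l) hl hne
      rw [show 2*l = l + l from two_mul l]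
      simp only [hIbar]
      exact h
    · rw [Set.not_nonempty_iff_eq_empty] at hne
      have h2 : Isegbar μ (2*l) = ∅ := by
        rw [show 2*l = l + l from two_mul l, hIbar]
        exact hne
      have hBempty : {x ∈ Set.Ico (0:ℝ) 1 | ∀ i ≤ l,
          segType μ (t - l + i) (tentCode μ (t - l + i) x) = Isegbar μ (l + i)} = ∅ := by
        ext x
        simp only [Set.mem_sep_iff, Set.mem_empty_iff_false, iff_false, not_and]
        intro hx hall
        have hl2 := hall l le_rfl
        have hempty : segType μ (t - l + l) (tentCode μ (t - l + l) x) = ∅ := by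
          rw [hl2, hIbar, hne]
        have hmem := GoBack.mem_segType_self (μ := μ) hx (t - l + l)
        rw [hempty] at hmem
        exact hmem
      rw [hBempty, h2, measure_empty]
      simp
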